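/- Let p and e be primes with p > 2 and e > 2, and let H = H(F_{p^e}) be the Heisenberg group with commutator subgroup H'. For any subgroups N₁, N₂ ≤ H' with |H : N₁| = |H : N₂| = p^{2e+2}, the groups H/N₁ and H/N₂ have the same quotient-group profile: for every finite group Q, the number of nontrivial normal subgroups K of H/N₁ with (H/N₁)/K isomorphic to Q equals the number of nontrivial normal subgroups K of H/N₂ with (H/N₂)/K isomorphic to Q. -/

import Mathlib

/-- The Heisenberg group over a field `K`: underlying set `K × K × K` with
multiplication `(α,β,γ)·(α',β',γ') = (α+α', β+β', γ+γ'+α·β')`. -/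
def Heisenberg (K : Type) [Field K] : Type := K × K × K

namespace Heisenberg

variable {K : Type} [Field K]

instance : Mul (Heisenberg K) :=
  ⟨fun a b => (a.1 + b.1, a.2.1 + b.2.1, a.2.2 + b.2.2 + a.1 * b.2.1)⟩

instance : One (Heisenberg K) := ⟨((0 : K), (0 : K), (0 : K))⟩

instance : Inv (Heisenberg K) :=
  ⟨fun a => (-a.1, -a.2.1, -a.2.2 + a.1 * a.2.1)⟩

lemma mul_def (a b : Heisenberg K) :
    a * b = (a.1 + b.1, a.2.1 + b.2.1, a.2.2 + b.2.2 + a.1 * b.2.1) := rfl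

lemma one_def : (1 : Heisenberg K) = ((0 : K), (0 : K), (0 : K)) := rfl

lemma inv_def (a : Heisenberg K) : a⁻¹ = (-a.1, -a.2.1, -a.2.2 + a.1 * a.2.1) := rfl

instance : Group (Heisenberg K) where
  mul := (· * ·)
  one := 1
  inv := (·⁻¹)
  mul_assoc a b c := by
    show (a * b) * c = a * (b * c)
    rw [mul_def, mul_def, mul_def, mul_def]
    refine Prod.ext ?_ (Prod.ext ?_ ?_) <;> dsimp only <;> ring
  one_mul a := by
    show 1 * a = a
    rw [mul_def, one_def]
    refine Prod.ext ?_ (Prod.ext ?_ ?_) <;> dsimp only <;> ring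
  mul_one a := by
    show a * 1 = a
    rw [mul_def, one_def]
    refine Prod.ext ?_ (Prod.ext ?_ ?_) <;> dsimp only <;> ring
  inv_mul_cancel a := by
    show a⁻¹ * a = 1
    rw [mul_def, one_def, inv_def]
    refine Prod.ext ?_ (Prod.ext ?_ ?_) <;> dsimp only <;> ring

instance [Finite K] : Finite (Heisenberg K) := inferInstanceAs (Finite (K × K × K))

/-- explicit constructor -/
def mk (a b c : K) : Heisenberg K := (a, b, c)

@[simp] lemma mk_1 (a b c : K) : (mk a b c).1 = a := rfl
@[simp] lemma mk_21 (a b c : K) : (mk a b c).2.1 = b := rfl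
@[simp] lemma mk_22 (a b c : K) : (mk a b c).2.2 = c := rfl

lemma eq_mk (x : Heisenberg K) : x = mk x.1 x.2.1 x.2.2 := rfl

lemma mk_mul (a b c a' b' c' : K) :
    (mk a b c) * (mk a' b' c') = mk (a + a') (b + b') (c + c' + a * b') := rfl

lemma ext3 {x y : Heisenberg K} (h1 : x.1 = y.1) (h2 : x.2.1 = y.2.1) (h3 : x.2.2 = y.2.2) :
    x = y := Prod.ext h1 (Prod.ext h2 h3)

/-- the central subgroup `{(0,0,γ)}`. -/
def Z : Subgroup (Heisenberg K) where
  carrier := {x | x.1 = 0 ∧ x.2.1 = 0}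
  one_mem' := ⟨rfl, rfl⟩
  mul_mem' := by
    rintro a b ⟨ha1, ha2⟩ ⟨hb1, hb2⟩
    rw [Set.mem_setOf_eq, mul_def]
    exact ⟨by simp [ha1, hb1], by simp [ha2, hb2]⟩
  inv_mem' := by
    rintro a ⟨ha1, ha2⟩
    rw [Set.mem_setOf_eq, inv_def]
    exact ⟨by simp [ha1], by simp [ha2]⟩

lemma mem_Z {x : Heisenberg K} : x ∈ (Z : Subgroup (Heisenberg K)) ↔ x.1 = 0 ∧ x.2.1 = 0 :=
  Iff.rfl

open scoped commutatorElement

lemma commutatorElement_eq (a b : Heisenberg K) :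
    ⁅a, b⁆ = mk (0 : K) (0 : K) (a.1 * b.2.1 - b.1 * a.2.1) := by
  show a * b * a⁻¹ * b⁻¹ = _
  rw [mul_def, mul_def, mul_def, inv_def, inv_def]
  refine ext3 ?_ ?_ ?_ <;> dsimp [mk] <;> ring

lemma Z_le_center : (Z : Subgroup (Heisenberg K)) ≤ Subgroup.center (Heisenberg K) := by
  rintro x ⟨h1, h2⟩
  rw [Subgroup.mem_center_iff]
  intro g
  simp only [mul_def]
  refine ext3 ?_ ?_ ?_ <;> dsimp <;> simp [h1, h2] <;> ring

lemma commutator_eq_Z : commutator (Heisenberg K) = (Z : Subgroup (Heisenberg K)) := by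
  apply le_antisymm
  · rw [commutator_def, Subgroup.commutator_le]
    intro g1 _ g2 _
    rw [commutatorElement_eq]
    exact ⟨rfl, rfl⟩
  · rintro x ⟨h1, h2⟩
    have hx : x = ⁅mk (1 : K) 0 0 , mk (0 : K) x.2.2 0⁆ := by
      rw [commutatorElement_eq]
      refine ext3 ?_ ?_ ?_ <;> simp [h1, h2]
    rw [commutator_def, hx]
    exact Subgroup.commutator_mem_commutator (Subgroup.mem_top _) (Subgroup.mem_top _)

lemma normal_of_le_Z (M : Subgroup (Heisenberg K)) (h : M ≤ Z) : M.Normal := by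
  constructor
  intro n hn g
  have hc : g * n = n * g := Subgroup.mem_center_iff.mp (Z_le_center (h hn)) g
  have : g * n * g⁻¹ = n := by rw [hc, mul_assoc, mul_inv_cancel, mul_one]
  rwa [this]

/-- embed an additive subgroup of `K` as a subgroup of the Heisenberg group. -/
def ι (W : AddSubgroup K) : Subgroup (Heisenberg K) where
  carrier := {x | x.1 = 0 ∧ x.2.1 = 0 ∧ x.2.2 ∈ W}
  one_mem' := ⟨rfl, rfl, W.zero_mem⟩
  mul_mem' := by
    rintro a b ⟨ha1, ha2, ha3⟩ ⟨hb1, hb2, hb3⟩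
    rw [Set.mem_setOf_eq, mul_def]
    refine ⟨by simp [ha1, hb1], by simp [ha2, hb2], ?_⟩
    dsimp
    rw [ha1]
    simpa using W.add_mem ha3 hb3
  inv_mem' := by
    rintro a ⟨ha1, ha2, ha3⟩
    rw [Set.mem_setOf_eq, inv_def]
    refine ⟨by simp [ha1], by simp [ha2], ?_⟩
    dsimp
    rw [ha2]
    simpa using W.neg_mem ha3

lemma mem_ι {W : AddSubgroup K} {x : Heisenberg K} :
    x ∈ ι W ↔ x.1 = 0 ∧ x.2.1 = 0 ∧ x.2.2 ∈ W := Iff.rfl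

lemma ι_le_Z (W : AddSubgroup K) : ι W ≤ Z := fun _ hx => ⟨hx.1, hx.2.1⟩

/-- the additive subgroup of `K` underlying a subgroup of `Z`. -/
def WOf (M : Subgroup (Heisenberg K)) : AddSubgroup K where
  carrier := {γ | mk (0 : K) 0 γ ∈ M}
  zero_mem' := M.one_mem
  add_mem' := by
    intro a b ha hb
    have h := M.mul_mem ha hb
    rw [Set.mem_setOf_eq]
    have : mk (0:K) 0 a * mk (0:K) 0 b = mk (0:K) 0 (a + b) := by
      rw [mk_mul]; refine ext3 ?_ ?_ ?_ <;> simp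
    rwa [this] at h
  neg_mem' := by
    intro a ha
    have h := M.inv_mem ha
    rw [Set.mem_setOf_eq]
    have : (mk (0:K) 0 a)⁻¹ = mk (0:K) 0 (-a) := by
      rw [inv_def]; refine ext3 ?_ ?_ ?_ <;> simp
    rwa [this] at h

lemma mem_WOf {M : Subgroup (Heisenberg K)} {γ : K} :
    γ ∈ WOf M ↔ mk (0 : K) 0 γ ∈ M := Iff.rfl

lemma WOf_ι (W : AddSubgroup K) : WOf (ι W) = W := by
  ext γ
  rw [mem_WOf, mem_ι]
  exact ⟨fun h => h.2.2, fun h => ⟨rfl, rfl, h⟩⟩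

lemma ι_WOf {M : Subgroup (Heisenberg K)} (h : M ≤ Z) : ι (WOf M) = M := by
  ext x
  rw [mem_ι, mem_WOf]
  constructor
  · rintro ⟨h1, h2, h3⟩
    have hx : x = mk (0:K) 0 x.2.2 := by refine ext3 ?_ ?_ ?_ <;> simp [h1, h2]
    rwa [hx]
  · intro hx
    obtain ⟨h1, h2⟩ := h hx
    refine ⟨h1, h2, ?_⟩
    have hx2 : mk (0:K) 0 x.2.2 = x := by refine ext3 ?_ ?_ ?_ <;> simp [h1, h2]
    rwa [hx2]

lemma ι_mono : Monotone (ι (K := K)) := fun _ _ h _ hx => ⟨hx.1, hx.2.1, h hx.2.2⟩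

lemma WOf_mono : Monotone (WOf (K := K)) := fun _ _ h _ hx => h hx

lemma ι_top : ι (⊤ : AddSubgroup K) = Z := by
  ext x
  rw [mem_ι, mem_Z]
  exact ⟨fun h => ⟨h.1, h.2.1⟩, fun h => ⟨h.1, h.2, trivial⟩⟩

/-- classification: a normal subgroup not inside Z contains Z -/
lemma Z_le_of_not_le {M : Subgroup (Heisenberg K)} (hM : M.Normal) (h : ¬ M ≤ Z) :
    Z ≤ M := by
  obtain ⟨x, hxM, hxZ⟩ := SetLike.not_le_iff_exists.mp h
  rw [mem_Z] at hxZ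
  rintro z ⟨hz1, hz2⟩
  have hz : z = mk (0:K) 0 z.2.2 := by refine ext3 ?_ ?_ ?_ <;> simp [hz1, hz2]
  have comm_mem : ∀ y : Heisenberg K, ⁅x, y⁆ ∈ M := by
    intro y
    have h2 : ⁅x, y⁆ = x * (y * x⁻¹ * y⁻¹) := by rw [commutatorElement_def]; group
    rw [h2]
    exact M.mul_mem hxM (hM.conj_mem x⁻¹ (M.inv_mem hxM) y)
  by_cases hx1 : x.1 = 0
  · have hx2 : x.2.1 ≠ 0 := fun hx2 => hxZ ⟨hx1, hx2⟩
    have key := comm_mem (mk (- z.2.2 / x.2.1 : K) 0 0)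
    rw [commutatorElement_eq] at key
    have heq : mk (0:K) 0 (x.1 * (mk (- z.2.2 / x.2.1 : K) 0 0).2.1
        - (mk (- z.2.2 / x.2.1 : K) 0 0).1 * x.2.1) = mk (0:K) 0 z.2.2 := by
      refine ext3 ?_ ?_ ?_ <;> simp
      field_simp
    rw [heq] at key
    rwa [hz]
  · have key := comm_mem (mk (0:K) (z.2.2 / x.1 : K) 0)
    rw [commutatorElement_eq] at key
    have heq : mk (0:K) 0 (x.1 * (mk (0:K) (z.2.2 / x.1 : K) 0).2.1
        - (mk (0:K) (z.2.2 / x.1 : K) 0).1 * x.2.1) = mk (0:K) 0 z.2.2 := by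
      refine ext3 ?_ ?_ ?_ <;> simp
      field_simp
    rw [heq] at key
    rwa [hz]

/-- the scaling automorphism -/
def scale (l : Kˣ) : Heisenberg K ≃* Heisenberg K where
  toFun a := mk ((l : K) * a.1) a.2.1 ((l : K) * a.2.2)
  invFun a := mk (((l⁻¹ : Kˣ) : K) * a.1) a.2.1 (((l⁻¹ : Kˣ) : K) * a.2.2)
  left_inv a := by refine ext3 ?_ ?_ ?_ <;> simp
  right_inv a := by refine ext3 ?_ ?_ ?_ <;> simp
  map_mul' a b := by
    simp only [mul_def]
    refine ext3 ?_ ?_ ?_ <;> dsimp [mk] <;> ring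

end Heisenberg
namespace Heisenberg

instance ι_normal {K : Type} [Field K] (W : AddSubgroup K) : (ι W).Normal :=
  normal_of_le_Z _ (ι_le_Z W)

variable {K : Type} [Field K]

section Cards
variable [Fintype K] {p e : ℕ}

lemma card_heis (hK : Fintype.card K = p ^ e) :
    Nat.card (Heisenberg K) = p ^ (3 * e) := by
  have h0 : Nat.card (Heisenberg K) = Nat.card (K × K × K) := rfl
  rw [h0, Nat.card_prod, Nat.card_prod, Nat.card_eq_fintype_card, hK, ← pow_add, ← pow_add]
  congr 1
  omega

omit [Fintype K] in
lemma card_Z' : Nat.card (Z : Subgroup (Heisenberg K)) = Nat.card K := by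
  apply Nat.card_congr
  refine ⟨fun x => x.val.2.2, fun γ => ⟨mk 0 0 γ, ⟨rfl, rfl⟩⟩, ?_, ?_⟩
  · rintro ⟨x, hx1, hx2⟩
    apply Subtype.ext
    exact (ext3 (by simpa using hx1.symm) (by simpa using hx2.symm) rfl)
  · intro γ; rfl

omit [Fintype K] in
lemma card_WOf {M : Subgroup (Heisenberg K)} (h : M ≤ Z) :
    Nat.card (WOf M) = Nat.card M := by
  apply Nat.card_congr
  refine ⟨fun γ => ⟨mk 0 0 γ.val, γ.prop⟩, fun x => ⟨x.val.2.2, ?_⟩, ?_, ?_⟩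
  · obtain ⟨h1, h2⟩ := h x.prop
    rw [mem_WOf]
    have hx : mk (0 : K) 0 x.val.2.2 = x.val :=
      ext3 (by simpa using h1.symm) (by simpa using h2.symm) rfl
    rw [hx]
    exact x.prop
  · intro γ; rfl
  · rintro ⟨x, hx⟩
    obtain ⟨h1, h2⟩ := h hx
    apply Subtype.ext
    exact ext3 (by simpa using h1.symm) (by simpa using h2.symm) rfl

lemma charP_of_card (hp : p.Prime) (he : 0 < e) (hK : Fintype.card K = p ^ e) :
    CharP K p := by
  obtain ⟨r, hr⟩ := CharP.exists K
  haveI := hr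
  obtain ⟨n, hrp, hcard⟩ := FiniteField.card K r
  have hdvd : p ∣ r ^ (n : ℕ) := by
    rw [← hcard, hK]
    exact dvd_pow_self p he.ne'
  have hpr : p = r := (Nat.prime_dvd_prime_iff_eq hp hrp).mp (hp.dvd_of_dvd_pow hdvd)
  rwa [hpr]

lemma char_smul (hp : p.Prime) (he : 0 < e) (hK : Fintype.card K = p ^ e) :
    ∀ x : K, p • x = 0 := by
  haveI := charP_of_card hp he hK
  intro x
  rw [nsmul_eq_mul, CharP.cast_eq_zero K p, zero_mul]

/-- any subgroup strictly between a subgroup of order `p^(e-2)` and the whole group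
has order `p^(e-1)` -/
lemma card_of_between (hp : p.Prime) (he2 : 2 < e) (hK : Fintype.card K = p ^ e)
    {U W : AddSubgroup K} (hU : Nat.card U = p ^ (e - 2)) (h1 : U < W) (h2 : W < ⊤) :
    Nat.card W = p ^ (e - 1) := by
  have hKcard : Nat.card K = p ^ e := by rw [Nat.card_eq_fintype_card, hK]
  have hdvd : Nat.card W ∣ p ^ e := by
    rw [← hKcard]
    have := AddSubgroup.card_addSubgroup_dvd_card W
    simpa using this
  obtain ⟨k, hk, hkeq⟩ := (Nat.dvd_prime_pow hp).mp hdvd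
  have hlt1 : p ^ (e - 2) < Nat.card W := by
    rcases lt_or_ge (p ^ (e - 2)) (Nat.card W) with h | h
    · exact h
    · exfalso
      rw [← hU] at h
      exact h1.ne (AddSubgroup.eq_of_le_of_card_ge h1.le h)
  have hlt2 : Nat.card W < p ^ e := by
    rcases lt_or_ge (Nat.card W) (p ^ e) with h | h
    · exact h
    · exfalso
      apply h2.ne
      apply AddSubgroup.eq_top_of_le_card
      rwa [hKcard]
  rw [hkeq] at hlt1 hlt2 ⊢
  have h3 : e - 2 < k := (Nat.pow_lt_pow_iff_right hp.one_lt).mp hlt1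
  have h4 : k < e := (Nat.pow_lt_pow_iff_right hp.one_lt).mp hlt2
  congr 1
  omega

end Cards

section QuotIso

variable [Fintype K] {p e : ℕ}

/-- Any two "hyperplane" central quotients of the Heisenberg group are isomorphic. -/
lemma quot_iso (hp : p.Prime) (he2 : 2 < e) (hK : Fintype.card K = p ^ e)
    (W₁ W₂ : AddSubgroup K) (h₁ : Nat.card W₁ = p ^ (e - 1)) (h₂ : Nat.card W₂ = p ^ (e - 1)) :
    Nonempty ((Heisenberg K ⧸ ι W₁) ≃* (Heisenberg K ⧸ ι W₂)) := by
  haveI : Fact p.Prime := ⟨hp⟩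
  haveI := charP_of_card hp (by omega) hK
  haveI : Module (ZMod p) K := AddCommGroup.zmodModule (char_smul hp (by omega) hK)
  have hKcard : Nat.card K = p ^ e := by rw [Nat.card_eq_fintype_card, hK]
  -- linear functionals
  have hφ : ∀ W : AddSubgroup K, Nat.card W = p ^ (e - 1) →
      ∃ φ : K →ₗ[ZMod p] ZMod p, (∀ x, x ∈ W ↔ φ x = 0) ∧ Function.Surjective φ := by
    intro W hW
    obtain ⟨U, hU⟩ : ∃ U : Submodule (ZMod p) K, U = AddSubgroup.toZModSubmodule p W := ⟨_, rfl⟩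
    have hUW : U.toAddSubgroup = W := by
      rw [hU]; exact AddSubgroup.toZModSubmodule_toAddSubgroup p W
    have hmemU : ∀ x : K, x ∈ U ↔ x ∈ W := by
      intro x; rw [← hUW]; rfl
    -- card of the quotient is p
    have hquot : Nat.card (K ⧸ U) = p := by
      have h0 : Nat.card (K ⧸ U) = Nat.card (K ⧸ U.toAddSubgroup) := rfl
      have h1 : Nat.card K = Nat.card (K ⧸ U.toAddSubgroup) * Nat.card U.toAddSubgroup :=
        AddSubgroup.card_eq_card_quotient_mul_card_addSubgroup U.toAddSubgroup
      rw [hUW, hKcard, hW] at h1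
      have he' : p ^ e = p * p ^ (e - 1) := by
        rw [← pow_succ']
        congr 1
        omega
      have hpos : 0 < p ^ (e - 1) := pow_pos hp.pos _
      rw [h0, hUW]
      nlinarith [Nat.card_pos (α := K ⧸ W)]
    -- finrank of the quotient is 1
    haveI : Finite (K ⧸ U) := Quotient.finite _
    haveI : Module.Finite (ZMod p) (K ⧸ U) := Module.Finite.of_finite
    have hfin : Module.finrank (ZMod p) (K ⧸ U) = 1 := by
      letI : Fintype (K ⧸ U) := Fintype.ofFinite _
      have hc : Fintype.card (K ⧸ U) = Fintype.card (ZMod p) ^ Module.finrank (ZMod p) (K ⧸ U) :=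
        Module.card_eq_pow_finrank
      rw [ZMod.card] at hc
      have hpow : p ^ 1 = p ^ Module.finrank (ZMod p) (K ⧸ U) := by
        rw [← Nat.card_eq_fintype_card] at hc
        rw [pow_one]
        omega
      exact (Nat.pow_right_injective hp.two_le hpow).symm
    have hrank : Module.finrank (ZMod p) (K ⧸ U) = Module.finrank (ZMod p) (ZMod p) := by
      rw [hfin, Module.finrank_self]
    obtain ⟨ψ⟩ := FiniteDimensional.nonempty_linearEquiv_of_finrank_eq hrank
    refine ⟨(ψ : (K ⧸ U) →ₗ[ZMod p] ZMod p).comp U.mkQ, ?_, ?_⟩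
    · intro x
      rw [← hmemU x]
      constructor
      · intro hx
        simp [LinearMap.comp_apply, (Submodule.Quotient.mk_eq_zero U).mpr hx]
      · intro hx
        have hker : U.mkQ x ∈ LinearMap.ker (ψ : (K ⧸ U) →ₗ[ZMod p] ZMod p) := hx
        rw [LinearEquiv.ker] at hker
        have h0 : U.mkQ x = 0 := hker
        rwa [Submodule.mkQ_apply, Submodule.Quotient.mk_eq_zero] at h0
    · exact ψ.surjective.comp (Submodule.mkQ_surjective U)
  obtain ⟨φ₁, hmem₁, hsurj₁⟩ := hφ W₁ h₁
  obtain ⟨φ₂, hmem₂, hsurj₂⟩ := hφ W₂ h₂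
  -- the multiplication-by-a linear maps
  let mulL : K → (K →ₗ[ZMod p] K) := fun a =>
    { toFun := fun x => a * x
      map_add' := fun x y => mul_add a x y
      map_smul' := fun c x => by
        show a * (c • x) = c • (a * x)
        rw [← ZMod.intCast_zmod_cast c, Int.cast_smul_eq_zsmul, Int.cast_smul_eq_zsmul]
        exact mul_smul_comm _ a x }
  let L : K →ₗ[ZMod p] (K →ₗ[ZMod p] ZMod p) :=
    { toFun := fun a => φ₁.comp (mulL a)
      map_add' := by
        intro a b; ext x; simp [mulL, add_mul]
      map_smul' := by
        intro c a
        ext x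
        show φ₁ ((c • a) * x) = c • φ₁ (a * x)
        rw [← ZMod.intCast_zmod_cast c, Int.cast_smul_eq_zsmul, Int.cast_smul_eq_zsmul,
          smul_mul_assoc, map_zsmul] }
  have hone_ne : (1 : ZMod p) ≠ 0 := one_ne_zero
  have hLinj : Function.Injective L := by
    rw [← LinearMap.ker_eq_bot, LinearMap.ker_eq_bot']
    intro a ha
    by_contra hane
    obtain ⟨y, hy⟩ := hsurj₁ 1
    have hall : ∀ x : K, φ₁ (a * x) = 0 := fun x => LinearMap.congr_fun ha x
    have h0 : φ₁ y = 0 := by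
      have := hall (a⁻¹ * y)
      rwa [← mul_assoc, mul_inv_cancel₀ hane, one_mul] at this
    rw [hy] at h0
    exact hone_ne h0
  haveI hfinD : Finite (K →ₗ[ZMod p] ZMod p) :=
    Finite.of_injective _ (DFunLike.coe_injective (F := K →ₗ[ZMod p] ZMod p))
  have hLbij : Function.Bijective L := by
    rw [Nat.bijective_iff_injective_and_card]
    refine ⟨hLinj, ?_⟩
    letI : Fintype (K →ₗ[ZMod p] ZMod p) := Fintype.ofFinite _
    have hcD : Fintype.card (Module.Dual (ZMod p) K) =
        Fintype.card (ZMod p) ^ Module.finrank (ZMod p) (Module.Dual (ZMod p) K) :=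
      Module.card_eq_pow_finrank
    have hcK : Fintype.card K = Fintype.card (ZMod p) ^ Module.finrank (ZMod p) K :=
      Module.card_eq_pow_finrank
    have hdual : Module.finrank (ZMod p) (Module.Dual (ZMod p) K) = Module.finrank (ZMod p) K :=
      Subspace.dual_finrank_eq
    rw [Nat.card_eq_fintype_card, Nat.card_eq_fintype_card]
    calc Fintype.card K = Fintype.card (ZMod p) ^ Module.finrank (ZMod p) K := hcK
      _ = Fintype.card (Module.Dual (ZMod p) K) := by rw [hcD, hdual]
      _ = Fintype.card (K →ₗ[ZMod p] ZMod p) := rfl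
  obtain ⟨l, hl⟩ := hLbij.2 φ₂
  have hlne : l ≠ 0 := by
    rintro rfl
    have h0 : φ₂ = 0 := by
      rw [← hl, map_zero]
    obtain ⟨y, hy⟩ := hsurj₂ 1
    rw [h0] at hy
    exact hone_ne (by simpa using hy.symm)
  have key : ∀ x : K, φ₁ (l * x) = φ₂ x := by
    intro x
    have := LinearMap.congr_fun hl x
    simpa [L, mulL] using this
  set lu : Kˣ := Units.mk0 l hlne with hlu
  have hmap : Subgroup.map (scale lu).toMonoidHom (ι W₂) = ι W₁ := by
    apply le_antisymm
    · rintro x ⟨y, hy, rfl⟩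
      obtain ⟨hy1, hy2, hy3⟩ := hy
      refine ⟨?_, ?_, ?_⟩
      · show (l : K) * y.1 = 0
        rw [hy1, mul_zero]
      · exact hy2
      · show (l : K) * y.2.2 ∈ W₁
        rw [hmem₁, key]
        exact (hmem₂ _).mp hy3
    · intro x hx
      obtain ⟨hx1, hx2, hx3⟩ := hx
      refine ⟨(scale lu).symm x, ?_, (scale lu).apply_symm_apply x⟩
      refine ⟨?_, ?_, ?_⟩
      · show ((lu⁻¹ : Kˣ) : K) * x.1 = 0
        rw [hx1, mul_zero]
      · exact hx2
      · show ((lu⁻¹ : Kˣ) : K) * x.2.2 ∈ W₂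
        rw [hmem₂, ← key]
        have hcan : (l : K) * (((lu⁻¹ : Kˣ) : K) * x.2.2) = x.2.2 := by
          rw [← mul_assoc]
          have : (l : K) * ((lu⁻¹ : Kˣ) : K) = 1 := by
            rw [hlu]
            exact Units.mul_inv (Units.mk0 l hlne)
          rw [this, one_mul]
        rw [hcan]
        exact (hmem₁ _).mp hx3
  exact ⟨(QuotientGroup.congr (ι W₂) (ι W₁) (scale lu) hmap).symm⟩

end QuotIso

end Heisenberg
section Combinators

variable {α β : Type*} [PartialOrder α] [PartialOrder β]

/-- restrict an order iso to an upper interval -/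
def OrderIso.restrUpper (f : α ≃o β) (a : α) : {x : α // a ≤ x} ≃o {y : β // f a ≤ y} where
  toFun x := ⟨f x.val, f.le_iff_le.mpr x.prop⟩
  invFun y := ⟨f.symm y.val, by
    have h : f a ≤ y.val := y.prop
    have := f.symm.le_iff_le.mpr h
    simpa using this⟩
  left_inv x := by apply Subtype.ext; simp
  right_inv y := by apply Subtype.ext; simp
  map_rel_iff' := by
    intro x y
    exact f.le_iff_le

/-- turn an order iso of closed upper intervals with fixed endpoints into
an equiv of open intervals -/
def strictIntervalEquiv [OrderTop α] [OrderTop β] (a : α) (b : β)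
    (G : {x : α // a ≤ x} ≃o {y : β // b ≤ y})
    (hbot : G ⟨a, le_rfl⟩ = ⟨b, le_rfl⟩)
    (htop : G ⟨⊤, le_top⟩ = ⟨⊤, le_top⟩) :
    {x : α // a < x ∧ x < ⊤} ≃ {y : β // b < y ∧ y < ⊤} where
  toFun x := ⟨(G ⟨x.val, x.prop.1.le⟩).val, by
    constructor
    · have h : G ⟨a, le_rfl⟩ < G ⟨x.val, x.prop.1.le⟩ :=
        G.lt_iff_lt.mpr (Subtype.mk_lt_mk.mpr x.prop.1)
      rw [hbot] at h
      exact h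
    · have h : G ⟨x.val, x.prop.1.le⟩ < G ⟨⊤, le_top⟩ :=
        G.lt_iff_lt.mpr (Subtype.mk_lt_mk.mpr x.prop.2)
      rw [htop] at h
      exact h⟩
  invFun y := ⟨(G.symm ⟨y.val, y.prop.1.le⟩).val, by
    constructor
    · have h : G.symm ⟨b, le_rfl⟩ < G.symm ⟨y.val, y.prop.1.le⟩ :=
        G.symm.lt_iff_lt.mpr (Subtype.mk_lt_mk.mpr y.prop.1)
      rw [← hbot, G.symm_apply_apply] at h
      exact h
    · have h : G.symm ⟨y.val, y.prop.1.le⟩ < G.symm ⟨⊤, le_top⟩ :=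
        G.symm.lt_iff_lt.mpr (Subtype.mk_lt_mk.mpr y.prop.2)
      rw [← htop, G.symm_apply_apply] at h
      exact h⟩
  left_inv x := by
    apply Subtype.ext
    show (G.symm ⟨(G ⟨x.val, x.prop.1.le⟩).val, _⟩).val = x.val
    have h : (⟨(G ⟨x.val, x.prop.1.le⟩).val, _⟩ : {y : β // b ≤ y}) = G ⟨x.val, x.prop.1.le⟩ :=
      Subtype.ext rfl
    rw [h, G.symm_apply_apply]
  right_inv y := by
    apply Subtype.ext
    show (G ⟨(G.symm ⟨y.val, y.prop.1.le⟩).val, _⟩).val = y.val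
    have h : (⟨(G.symm ⟨y.val, y.prop.1.le⟩).val, _⟩ : {x : α // a ≤ x}) = G.symm ⟨y.val, y.prop.1.le⟩ :=
      Subtype.ext rfl
    rw [h, G.apply_symm_apply]

end Combinators

namespace Heisenberg

variable {K : Type} [Field K] [Fintype K] {p e : ℕ}

lemma interval_equiv (hp : p.Prime) (he2 : 2 < e) (hK : Fintype.card K = p ^ e)
    (V₁ V₂ : AddSubgroup K) (hc₁ : Nat.card V₁ = p ^ (e - 2)) (hc₂ : Nat.card V₂ = p ^ (e - 2)) :
    Nonempty ({W : AddSubgroup K // V₁ < W ∧ W < ⊤} ≃ {W : AddSubgroup K // V₂ < W ∧ W < ⊤}) := by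
  haveI : Fact p.Prime := ⟨hp⟩
  haveI := charP_of_card hp (by omega) hK
  haveI : Module (ZMod p) K := AddCommGroup.zmodModule (char_smul hp (by omega) hK)
  have hKcard : Nat.card K = p ^ e := by rw [Nat.card_eq_fintype_card, hK]
  obtain ⟨J, hJ⟩ : ∃ J : AddSubgroup K ≃o Submodule (ZMod p) K,
      J = AddSubgroup.toZModSubmodule p := ⟨_, rfl⟩
  have hJadd : ∀ V : AddSubgroup K, (J V).toAddSubgroup = V := by
    intro V
    rw [hJ]
    exact AddSubgroup.toZModSubmodule_toAddSubgroup p V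
  -- the two quotients have the same cardinality, hence isomorphic
  have hq : ∀ V : AddSubgroup K, Nat.card V = p ^ (e - 2) →
      Nat.card (K ⧸ (J V : Submodule (ZMod p) K)) = p ^ 2 := by
    intro V hV
    have h0 : Nat.card (K ⧸ (J V : Submodule (ZMod p) K))
        = Nat.card (K ⧸ (J V : Submodule (ZMod p) K).toAddSubgroup) := rfl
    have h1 : Nat.card K = Nat.card (K ⧸ (J V : Submodule (ZMod p) K).toAddSubgroup) *
        Nat.card (J V : Submodule (ZMod p) K).toAddSubgroup :=
      AddSubgroup.card_eq_card_quotient_mul_card_addSubgroup _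
    rw [hJadd V, hKcard, hV] at h1
    have he' : p ^ e = p ^ 2 * p ^ (e - 2) := by
      rw [← pow_add]
      congr 1
      omega
    rw [h0, hJadd V]
    have hpos : 0 < p ^ (e - 2) := pow_pos hp.pos _
    nlinarith [Nat.card_pos (α := K ⧸ V)]
  haveI f1 : Finite (K ⧸ (J V₁ : Submodule (ZMod p) K)) := Quotient.finite _
  haveI f2 : Finite (K ⧸ (J V₂ : Submodule (ZMod p) K)) := Quotient.finite _
  have hfr : ∀ (V : AddSubgroup K), Nat.card V = p ^ (e - 2) →
      ∀ [Finite (K ⧸ (J V : Submodule (ZMod p) K))],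
      p ^ 2 = p ^ Module.finrank (ZMod p) (K ⧸ (J V : Submodule (ZMod p) K)) := by
    intro V hV _
    letI : Fintype (K ⧸ (J V : Submodule (ZMod p) K)) := Fintype.ofFinite _
    have hc : Fintype.card (K ⧸ (J V : Submodule (ZMod p) K)) =
        Fintype.card (ZMod p) ^ Module.finrank (ZMod p) (K ⧸ (J V : Submodule (ZMod p) K)) :=
      Module.card_eq_pow_finrank
    rw [ZMod.card, ← Nat.card_eq_fintype_card] at hc
    rw [← hc, hq V hV]
  have hfrank : Module.finrank (ZMod p) (K ⧸ (J V₁ : Submodule (ZMod p) K)) =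
      Module.finrank (ZMod p) (K ⧸ (J V₂ : Submodule (ZMod p) K)) :=
    Nat.pow_right_injective hp.two_le ((hfr V₁ hc₁).symm.trans (hfr V₂ hc₂))
  obtain ⟨ℓ⟩ := FiniteDimensional.nonempty_linearEquiv_of_finrank_eq hfrank
  -- order isomorphism between upper intervals
  let g : {x : Submodule (ZMod p) K // J V₁ ≤ x} ≃o {y : Submodule (ZMod p) K // J V₂ ≤ y} :=
    (Submodule.comapMkQRelIso (J V₁)).symm.trans
      ((Submodule.orderIsoMapComap ℓ).trans (Submodule.comapMkQRelIso (J V₂)))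
  have hg_bot : g ⟨J V₁, le_rfl⟩ = ⟨J V₂, le_rfl⟩ := by
    have h1 : (Submodule.comapMkQRelIso (J V₁)).symm ⟨J V₁, Set.mem_Ici.mpr le_rfl⟩ = ⊥ := by
      rw [OrderIso.symm_apply_eq]
      apply Subtype.ext
      show (J V₁ : Submodule (ZMod p) K) = Submodule.comap (J V₁ : Submodule (ZMod p) K).mkQ ⊥
      rw [Submodule.comap_bot, Submodule.ker_mkQ]
    show (Submodule.comapMkQRelIso (J V₂)) ((Submodule.orderIsoMapComap ℓ)
      ((Submodule.comapMkQRelIso (J V₁)).symm ⟨J V₁, Set.mem_Ici.mpr le_rfl⟩)) = ⟨J V₂, Set.mem_Ici.mpr le_rfl⟩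
    rw [h1]
    have h2 : (Submodule.orderIsoMapComap ℓ) ⊥ = ⊥ := by
      show Submodule.map (ℓ : (K ⧸ J V₁) →ₗ[ZMod p] (K ⧸ J V₂)) ⊥ = ⊥
      exact Submodule.map_bot _
    rw [h2]
    apply Subtype.ext
    show Submodule.comap (J V₂ : Submodule (ZMod p) K).mkQ ⊥ = (J V₂ : Submodule (ZMod p) K)
    rw [Submodule.comap_bot, Submodule.ker_mkQ]
  have hg_top : g ⟨⊤, le_top⟩ = ⟨⊤, le_top⟩ := by
    have h1 : (Submodule.comapMkQRelIso (J V₁)).symm ⟨⊤, Set.mem_Ici.mpr le_top⟩ = ⊤ := by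
      rw [OrderIso.symm_apply_eq]
      apply Subtype.ext
      show (⊤ : Submodule (ZMod p) K) = Submodule.comap (J V₁ : Submodule (ZMod p) K).mkQ ⊤
      rw [Submodule.comap_top]
    show (Submodule.comapMkQRelIso (J V₂)) ((Submodule.orderIsoMapComap ℓ)
      ((Submodule.comapMkQRelIso (J V₁)).symm ⟨⊤, Set.mem_Ici.mpr le_top⟩)) = ⟨⊤, Set.mem_Ici.mpr le_top⟩
    rw [h1]
    have h2 : (Submodule.orderIsoMapComap ℓ) ⊤ = ⊤ := by
      show Submodule.map (ℓ : (K ⧸ J V₁) →ₗ[ZMod p] (K ⧸ J V₂)) ⊤ = ⊤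
      rw [Submodule.map_top]
      exact LinearMap.range_eq_top.mpr ℓ.surjective
    rw [h2]
    apply Subtype.ext
    show Submodule.comap (J V₂ : Submodule (ZMod p) K).mkQ ⊤ = (⊤ : Submodule (ZMod p) K)
    rw [Submodule.comap_top]
  -- full iso between upper intervals of AddSubgroups
  let G : {W : AddSubgroup K // V₁ ≤ W} ≃o {W : AddSubgroup K // V₂ ≤ W} :=
    (J.restrUpper V₁).trans (g.trans (J.restrUpper V₂).symm)
  have hG_bot : G ⟨V₁, le_rfl⟩ = ⟨V₂, le_rfl⟩ := by
    show (J.restrUpper V₂).symm (g ((J.restrUpper V₁) ⟨V₁, le_rfl⟩)) = ⟨V₂, le_rfl⟩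
    have h1 : (J.restrUpper V₁) ⟨V₁, le_rfl⟩ = ⟨J V₁, le_rfl⟩ := Subtype.ext rfl
    rw [h1, hg_bot, OrderIso.symm_apply_eq]
    exact Subtype.ext rfl
  have hG_top : G ⟨⊤, le_top⟩ = ⟨⊤, le_top⟩ := by
    show (J.restrUpper V₂).symm (g ((J.restrUpper V₁) ⟨⊤, le_top⟩)) = ⟨⊤, le_top⟩
    have h1 : (J.restrUpper V₁) ⟨⊤, le_top⟩ = ⟨⊤, le_top⟩ := by
      apply Subtype.ext
      show J ⊤ = ⊤
      exact J.map_top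
    rw [h1, hg_top, OrderIso.symm_apply_eq]
    apply Subtype.ext
    show (⊤ : Submodule (ZMod p) K) = J ⊤
    rw [J.map_top]
  exact ⟨strictIntervalEquiv V₁ V₂ G hG_bot hG_top⟩

end Heisenberg
namespace Heisenberg

variable {K : Type} [Field K] (Q : Type) [Group Q]

/-- transport of quotient isos along equality of subgroups -/
lemma iso_of_eq {G : Type} [Group G] {M M' : Subgroup G} [hM : M.Normal] [hM' : M'.Normal]
    (h : M = M') (f : Nonempty ((G ⧸ M) ≃* Q)) : Nonempty ((G ⧸ M') ≃* Q) := by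
  subst h
  exact f

/-- Step 1: subgroups of the quotient correspond to intermediate subgroups. -/
lemma ST_equiv (N : Subgroup (Heisenberg K)) [hN : N.Normal] :
    Nonempty ({A : Subgroup (Heisenberg K ⧸ N) //
        A ≠ ⊥ ∧ ∃ _hA : A.Normal, Nonempty ((Heisenberg K ⧸ N) ⧸ A ≃* Q)} ≃
      {M : Subgroup (Heisenberg K) //
        N < M ∧ ∃ _hM : M.Normal, Nonempty ((Heisenberg K) ⧸ M ≃* Q)}) := by
  set π := QuotientGroup.mk' N with hπdef
  have hπ : Function.Surjective π := QuotientGroup.mk'_surjective N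
  have hker : π.ker = N := QuotientGroup.ker_mk' N
  have hmapcomap : ∀ A : Subgroup (Heisenberg K ⧸ N),
      Subgroup.map π (Subgroup.comap π A) = A :=
    fun A => Subgroup.map_comap_eq_self_of_surjective hπ A
  have hmapN : Subgroup.map π N = ⊥ := by
    apply le_antisymm
    · rintro x ⟨y, hy, rfl⟩
      simp only [Subgroup.mem_bot]
      exact (QuotientGroup.eq_one_iff y).mpr hy
    · exact bot_le
  refine ⟨⟨?_, ?_, ?_, ?_⟩⟩
  · -- toFun
    rintro ⟨A, hA⟩
    refine ⟨Subgroup.comap π A, ?_, ?_⟩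
    · -- N < comap π A
      have hle : N ≤ Subgroup.comap π A := by
        have h := Subgroup.ker_le_comap (f := π) (H := A)
        rwa [hker] at h
      refine lt_of_le_of_ne hle ?_
      intro heq
      apply hA.1
      rw [← hmapcomap A, ← heq, hmapN]
    · obtain ⟨hnorm, hiso⟩ := hA.2
      haveI := hnorm
      haveI hMn : (Subgroup.comap π A).Normal := hnorm.comap π
      refine ⟨hMn, ?_⟩
      have hle : N ≤ Subgroup.comap π A := by
        have h := Subgroup.ker_le_comap (f := π) (H := A)
        rwa [hker] at h
      haveI : ((Subgroup.comap π A).map π).Normal := by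
        rw [hmapcomap A]; exact hnorm
      have e := QuotientGroup.quotientQuotientEquivQuotient N (Subgroup.comap π A) hle
      have hiso' : Nonempty ((Heisenberg K ⧸ N) ⧸ (Subgroup.comap π A).map π ≃* Q) :=
        iso_of_eq Q (hmapcomap A).symm hiso
      obtain ⟨f⟩ := hiso'
      exact ⟨e.symm.trans f⟩
  · -- invFun
    rintro ⟨M, hM⟩
    refine ⟨Subgroup.map π M, ?_, ?_⟩
    · intro heq
      have : M ≤ N := by
        have h1 : M ≤ Subgroup.comap π ⊥ := by
          rw [← heq]
          exact Subgroup.le_comap_map π M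
        rwa [MonoidHom.comap_bot, hker] at h1
      exact absurd this (not_le_of_gt hM.1)
    · obtain ⟨hnorm, hiso⟩ := hM.2
      haveI := hnorm
      haveI : (Subgroup.map π M).Normal := hnorm.map π hπ
      refine ⟨inferInstance, ?_⟩
      have e := QuotientGroup.quotientQuotientEquivQuotient N M hM.1.le
      obtain ⟨f⟩ := hiso
      exact ⟨e.trans f⟩
  · -- left inverse
    rintro ⟨A, hA⟩
    apply Subtype.ext
    exact hmapcomap A
  · -- right inverse
    rintro ⟨M, hM⟩
    apply Subtype.ext
    show Subgroup.comap π (Subgroup.map π M) = M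
    rw [Subgroup.comap_map_eq, hker, sup_eq_left]
    exact hM.1.le

/-- Step 2: partition of intermediate subgroups -/
lemma T_partition (N : Subgroup (Heisenberg K)) (hNZ : N < Z) :
    Nonempty ({M : Subgroup (Heisenberg K) //
        N < M ∧ ∃ _hM : M.Normal, Nonempty ((Heisenberg K) ⧸ M ≃* Q)} ≃
      ({M : Subgroup (Heisenberg K) //
        Z ≤ M ∧ ∃ _hM : M.Normal, Nonempty ((Heisenberg K) ⧸ M ≃* Q)} ⊕
       {M : Subgroup (Heisenberg K) //
        N < M ∧ M < Z ∧ ∃ _hM : M.Normal, Nonempty ((Heisenberg K) ⧸ M ≃* Q)})) := by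
  classical
  refine ⟨(Equiv.sumCompl (fun x : {M : Subgroup (Heisenberg K) //
      N < M ∧ ∃ _hM : M.Normal, Nonempty ((Heisenberg K) ⧸ M ≃* Q)} => Z ≤ x.val)).symm.trans
    (Equiv.sumCongr ?_ ?_)⟩
  · -- Z ≤ M part
    refine ⟨fun x => ⟨x.val.val, x.prop, x.val.prop.2⟩,
      fun y => ⟨⟨y.val, lt_of_lt_of_le hNZ y.prop.1, y.prop.2⟩, y.prop.1⟩, ?_, ?_⟩
    · intro x; apply Subtype.ext; apply Subtype.ext; rfl
    · intro y; apply Subtype.ext; rfl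
  · -- M < Z part
    refine ⟨fun x => ⟨x.val.val, x.val.prop.1, ?_, x.val.prop.2⟩,
      fun y => ⟨⟨y.val, y.prop.1, y.prop.2.2⟩, ?_⟩, ?_, ?_⟩
    · -- M < Z
      obtain ⟨hnorm, -⟩ := x.val.prop.2
      have hle : x.val.val ≤ Z := by
        by_contra hnle
        exact x.prop (Z_le_of_not_le hnorm hnle)
      refine lt_of_le_of_ne hle ?_
      intro heq
      exact x.prop (le_of_eq heq.symm)
    · -- ¬ Z ≤ M
      intro hle
      exact y.prop.2.1.ne (le_antisymm y.prop.2.1.le hle)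
    · intro x; apply Subtype.ext; apply Subtype.ext; rfl
    · intro y; apply Subtype.ext; rfl

/-- Step 3a: lower part corresponds to additive subgroups of K -/
lemma T2_equiv_W (N : Subgroup (Heisenberg K)) (hNZ : N ≤ Z) :
    Nonempty ({M : Subgroup (Heisenberg K) //
        N < M ∧ M < Z ∧ ∃ _hM : M.Normal, Nonempty ((Heisenberg K) ⧸ M ≃* Q)} ≃
      {W : AddSubgroup K // WOf N < W ∧ W < ⊤ ∧
        Nonempty ((Heisenberg K) ⧸ (ι W) ≃* Q)}) := by
  have hNeq : ι (WOf N) = N := ι_WOf hNZ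
  refine ⟨⟨?_, ?_, ?_, ?_⟩⟩
  · rintro ⟨M, h1, h2, h3⟩
    have hMZ : M ≤ Z := h2.le
    have hMeq : ι (WOf M) = M := ι_WOf hMZ
    refine ⟨WOf M, ?_, ?_, ?_⟩
    · refine lt_of_le_of_ne (WOf_mono h1.le) ?_
      intro heq
      apply h1.ne
      rw [← hNeq, ← hMeq, heq]
    · refine lt_of_le_of_ne le_top ?_
      intro heq
      apply h2.ne
      rw [← hMeq, heq, ι_top]
    · obtain ⟨hnorm, hiso⟩ := h3
      haveI := hnorm
      exact iso_of_eq Q hMeq.symm hiso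
  · rintro ⟨W, h1, h2, h3⟩
    refine ⟨ι W, ?_, ?_, ?_⟩
    · refine lt_of_le_of_ne ?_ ?_
      · rw [← hNeq]; exact ι_mono h1.le
      · intro heq
        apply h1.ne
        rw [← WOf_ι W, ← heq, ← hNeq, WOf_ι]
    · refine lt_of_le_of_ne (ι_le_Z W) ?_
      intro heq
      apply h2.ne
      rw [← WOf_ι W, heq, ← ι_top, WOf_ι]
    · exact ⟨ι_normal W, h3⟩
  · rintro ⟨M, h1, h2, h3⟩
    apply Subtype.ext
    exact ι_WOf h2.le
  · rintro ⟨W, h1, h2, h3⟩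
    apply Subtype.ext
    exact WOf_ι W

variable [Fintype K] {p e : ℕ}

/-- Step 3b: transporting between the two W-intervals, preserving the quotient type -/
lemma T2W_equiv (hp : p.Prime) (he2 : 2 < e) (hK : Fintype.card K = p ^ e)
    (V₁ V₂ : AddSubgroup K) (hc₁ : Nat.card V₁ = p ^ (e - 2)) (hc₂ : Nat.card V₂ = p ^ (e - 2)) :
    Nonempty ({W : AddSubgroup K // V₁ < W ∧ W < ⊤ ∧
        Nonempty ((Heisenberg K) ⧸ (ι W) ≃* Q)} ≃
      {W : AddSubgroup K // V₂ < W ∧ W < ⊤ ∧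
        Nonempty ((Heisenberg K) ⧸ (ι W) ≃* Q)}) := by
  obtain ⟨E⟩ := interval_equiv hp he2 hK V₁ V₂ hc₁ hc₂
  have hcard₁ : ∀ W : AddSubgroup K, V₁ < W → W < ⊤ → Nat.card W = p ^ (e - 1) :=
    fun W h1 h2 => card_of_between hp he2 hK hc₁ h1 h2
  have hcard₂ : ∀ W : AddSubgroup K, V₂ < W → W < ⊤ → Nat.card W = p ^ (e - 1) :=
    fun W h1 h2 => card_of_between hp he2 hK hc₂ h1 h2
  refine ⟨⟨?_, ?_, ?_, ?_⟩⟩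
  · rintro ⟨W, h1, h2, h3⟩
    refine ⟨(E ⟨W, h1, h2⟩).val, (E ⟨W, h1, h2⟩).prop.1, (E ⟨W, h1, h2⟩).prop.2, ?_⟩
    obtain ⟨f⟩ := h3
    obtain ⟨g⟩ := quot_iso hp he2 hK (E ⟨W, h1, h2⟩).val W
      (hcard₂ _ (E ⟨W, h1, h2⟩).prop.1 (E ⟨W, h1, h2⟩).prop.2) (hcard₁ W h1 h2)
    exact ⟨g.trans f⟩
  · rintro ⟨W, h1, h2, h3⟩
    refine ⟨(E.symm ⟨W, h1, h2⟩).val, (E.symm ⟨W, h1, h2⟩).prop.1,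
      (E.symm ⟨W, h1, h2⟩).prop.2, ?_⟩
    obtain ⟨f⟩ := h3
    obtain ⟨g⟩ := quot_iso hp he2 hK (E.symm ⟨W, h1, h2⟩).val W
      (hcard₁ _ (E.symm ⟨W, h1, h2⟩).prop.1 (E.symm ⟨W, h1, h2⟩).prop.2) (hcard₂ W h1 h2)
    exact ⟨g.trans f⟩
  · rintro ⟨W, h1, h2, h3⟩
    apply Subtype.ext
    have key : ∀ (z : {W : AddSubgroup K // V₂ < W ∧ W < ⊤}), z = E ⟨W, h1, h2⟩ →
        (E.symm z).val = W := by
      rintro z rfl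
      rw [E.symm_apply_apply]
    exact key ⟨(E ⟨W, h1, h2⟩).val, (E ⟨W, h1, h2⟩).prop.1, (E ⟨W, h1, h2⟩).prop.2⟩
      (Subtype.ext rfl)
  · rintro ⟨W, h1, h2, h3⟩
    apply Subtype.ext
    have key : ∀ (z : {W : AddSubgroup K // V₁ < W ∧ W < ⊤}), z = E.symm ⟨W, h1, h2⟩ →
        (E z).val = W := by
      rintro z rfl
      rw [E.apply_symm_apply]
    exact key ⟨(E.symm ⟨W, h1, h2⟩).val, (E.symm ⟨W, h1, h2⟩).prop.1,
      (E.symm ⟨W, h1, h2⟩).prop.2⟩ (Subtype.ext rfl)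

end Heisenberg
/-- Any two quotients `H/N₁`, `H/N₂` of the Heisenberg group
`H = H(F_{p^e})` by subgroups `N₁, N₂ ≤ H'` of index `p^(2e+2)` have the same
quotient-group profile: for every finite group `Q`, the number of nontrivial
normal subgroups `A` of `H/N₁` with `(H/N₁)/A ≅ Q` equals the corresponding
number for `H/N₂`. -/
theorem heisenberg_quotients_same_quotient_profile
    (p e : ℕ) (hp : p.Prime) (he : e.Prime) (hp2 : 2 < p) (he2 : 2 < e)
    (K : Type) [Field K] [Fintype K] (hK : Fintype.card K = p ^ e)
    (N₁ N₂ : Subgroup (Heisenberg K)) [N₁.Normal] [N₂.Normal]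
    (hN₁ : N₁ ≤ commutator (Heisenberg K)) (hN₂ : N₂ ≤ commutator (Heisenberg K))
    (hi₁ : N₁.index = p ^ (2 * e + 2)) (hi₂ : N₂.index = p ^ (2 * e + 2))
    (Q : Type) [Group Q] [Finite Q] :
    Nat.card {A : Subgroup (Heisenberg K ⧸ N₁) //
        A ≠ ⊥ ∧ ∃ hA : A.Normal, Nonempty ((Heisenberg K ⧸ N₁) ⧸ A ≃* Q)} =
    Nat.card {A : Subgroup (Heisenberg K ⧸ N₂) //
        A ≠ ⊥ ∧ ∃ hA : A.Normal, Nonempty ((Heisenberg K ⧸ N₂) ⧸ A ≃* Q)} := by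
  have hHcard : Nat.card (Heisenberg K) = p ^ (3 * e) := Heisenberg.card_heis hK
  have hKcard : Nat.card K = p ^ e := by rw [Nat.card_eq_fintype_card, hK]
  have hNcard : ∀ N : Subgroup (Heisenberg K), N.index = p ^ (2 * e + 2) →
      Nat.card N = p ^ (e - 2) := by
    intro N hi
    have h := Subgroup.index_mul_card N
    rw [hi, hHcard] at h
    have hsplit : p ^ (3 * e) = p ^ (2 * e + 2) * p ^ (e - 2) := by
      rw [← pow_add]
      congr 1
      omega
    rw [hsplit] at h
    exact Nat.eq_of_mul_eq_mul_left (pow_pos hp.pos _) h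
  have hNZ : ∀ N : Subgroup (Heisenberg K), N ≤ commutator (Heisenberg K) →
      N.index = p ^ (2 * e + 2) → N < Heisenberg.Z := by
    intro N hle hi
    have h1 : N ≤ Heisenberg.Z := by rwa [Heisenberg.commutator_eq_Z] at hle
    refine lt_of_le_of_ne h1 ?_
    intro heq
    have hc := hNcard N hi
    rw [heq, Heisenberg.card_Z', hKcard] at hc
    have := Nat.pow_right_injective hp.two_le hc
    omega
  have hW₁ : Nat.card (Heisenberg.WOf N₁) = p ^ (e - 2) := by
    rw [Heisenberg.card_WOf (hNZ N₁ hN₁ hi₁).le]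
    exact hNcard N₁ hi₁
  have hW₂ : Nat.card (Heisenberg.WOf N₂) = p ^ (e - 2) := by
    rw [Heisenberg.card_WOf (hNZ N₂ hN₂ hi₂).le]
    exact hNcard N₂ hi₂
  obtain ⟨e1⟩ := Heisenberg.ST_equiv Q N₁
  obtain ⟨e1'⟩ := Heisenberg.ST_equiv Q N₂
  obtain ⟨e2⟩ := Heisenberg.T_partition Q N₁ (hNZ N₁ hN₁ hi₁)
  obtain ⟨e2'⟩ := Heisenberg.T_partition Q N₂ (hNZ N₂ hN₂ hi₂)
  obtain ⟨e3⟩ := Heisenberg.T2_equiv_W Q N₁ (hNZ N₁ hN₁ hi₁).le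
  obtain ⟨e3'⟩ := Heisenberg.T2_equiv_W Q N₂ (hNZ N₂ hN₂ hi₂).le
  obtain ⟨e4⟩ := Heisenberg.T2W_equiv Q hp he2 hK (Heisenberg.WOf N₁) (Heisenberg.WOf N₂) hW₁ hW₂
  exact Nat.card_congr
    (e1.trans ((e2.trans ((Equiv.sumCongr (Equiv.refl _)
      (e3.trans (e4.trans e3'.symm))).trans e2'.symm)).trans e1'.symm))
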